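/- arXiv:0804.0889 — 2 statements merged into one kernel-verified Lean document; each statement's English description precedes it below -/
import Mathlib

section
/- Let M ≥ N ≥ 1 be integers and a > −1 a real number, and define φ(x) = exp((a/(1+a))·2Mx) − (1+a)^{2(M−N)+1} · Σ_{j=0}^{2N−2} (−a)^j · L_j^{(2(M−N))}(2Mx). Then for every real polynomial p of degree at most 2N−3, ⟨p, φ⟩_4 = 0. -/
open MeasureTheory

/-- The generalized Laguerre polynomial
`L_n^(α)(x) = ∑_{k=0}^{n} (-1)^k (n+α choose n-k) x^k / k!`. -/
noncomputable def genLaguerre (n α : ℕ) (x : ℝ) : ℝ :=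
  ∑ k ∈ Finset.range (n + 1),
    (-1 : ℝ) ^ k * ((n + α).choose (n - k) : ℝ) * x ^ k / (k.factorial : ℝ)

/-- The skew inner product
`⟨f, g⟩₄ = ∫_0^∞ (f(x) g'(x) - f'(x) g(x)) x^(2(M-N)+1) e^(-2Mx) dx`. -/
noncomputable def skewInner (M N : ℕ) (f g : ℝ → ℝ) : ℝ :=
  ∫ x in Set.Ioi (0 : ℝ),
    (f x * deriv g x - deriv f x * g x) * x ^ (2 * (M - N) + 1) *
      Real.exp (-(2 * (M : ℝ)) * x)


open Finset Nat

lemma trinom (j α k : ℕ) (hk : k ≤ j) :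
    (j+α).choose (j-k) * (α+k).choose k = (j+α).choose j * j.choose k := by
  have a1 : (α+k).choose k * k ! * α ! = (α+k)! := by
    have h := Nat.choose_mul_factorial_mul_factorial (Nat.le_add_left k α)
    simpa using h
  have a2 : (j+α).choose (j-k) * (j-k)! * (α+k)! = (j+α)! := by
    have h := Nat.choose_mul_factorial_mul_factorial (show j-k ≤ j+α by omega)
    rwa [show j+α-(j-k) = α+k by omega] at h
  have a3 : j.choose k * k ! * (j-k)! = j ! := Nat.choose_mul_factorial_mul_factorial hk
  have a4 : (j+α).choose j * j ! * α ! = (j+α)! := by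
    have h := Nat.choose_mul_factorial_mul_factorial (Nat.le_add_right j α)
    simpa using h
  have key : ((j+α).choose (j-k) * (α+k).choose k) * ((j-k)! * (k ! * α !))
      = ((j+α).choose j * j.choose k) * ((j-k)! * (k ! * α !)) := by
    have c1 : ((j+α).choose (j-k) * (α+k).choose k) * ((j-k)! * (k ! * α !))
        = ((j+α).choose (j-k) * (j-k)!) * ((α+k).choose k * k ! * α !) := by ring
    have c2 : ((j+α).choose j * j.choose k) * ((j-k)! * (k ! * α !))
        = ((j+α).choose j * (j.choose k * k ! * (j-k)!)) * α ! := by ring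
    rw [c1, c2, a1, a3]
    rw [show (j+α).choose (j-k) * (j-k)! * (α+k)!
        = (j+α).choose (j-k) * (j-k)! * (α+k)! from rfl]
    calc (j+α).choose (j-k) * (j-k)! * (α+k)! = (j+α)! := a2
      _ = (j+α).choose j * j ! * α ! := a4.symm
  exact Nat.eq_of_mul_eq_mul_right (by positivity) key

lemma Scomb : ∀ (m j α : ℕ),
    ∑ k ∈ range (j+1), (-1:ℤ)^k * ((j+α).choose (j-k)) * ((m+α+k).choose k)
      = (-1)^j * (m.choose j) := by
  intro m
  induction m with
  | zero =>
    intro j α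
    have h : ∀ k ∈ range (j+1), (-1:ℤ)^k * ((j+α).choose (j-k)) * ((0+α+k).choose k)
        = ((j+α).choose j : ℤ) * ((-1)^k * (j.choose k)) := by
      intro k hk
      simp only [mem_range] at hk
      have h2 := congrArg (Nat.cast : ℕ → ℤ) (trinom j α k (by omega))
      push_cast at h2
      rw [show 0+α+k = α+k by omega]
      linear_combination ((-1:ℤ)^k) * h2
    rw [Finset.sum_congr rfl h, ← Finset.mul_sum, Int.alternating_sum_range_choose]
    rcases Nat.eq_zero_or_pos j with hj | hj
    · subst hj; simp
    · rw [if_neg (by omega), Nat.choose_eq_zero_of_lt hj]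
      simp
  | succ m ih =>
    intro j α
    rcases Nat.eq_zero_or_pos j with hj | hj
    · subst hj; simp
    obtain ⟨j', rfl⟩ : ∃ j', j = j' + 1 := ⟨j - 1, by omega⟩
    rw [Finset.sum_range_succ']
    have hsplit : ∀ i ∈ range (j'+1),
        (-1:ℤ)^(i+1) * (((j'+1)+α).choose ((j'+1)-(i+1))) * (((m+1)+α+(i+1)).choose (i+1))
        = (-((-1:ℤ)^i * ((j'+(α+1)).choose (j'-i)) * ((m+(α+1)+i).choose i)))
          + (-1:ℤ)^(i+1) * (((j'+1)+α).choose ((j'+1)-(i+1))) * ((m+α+(i+1)).choose (i+1)) := by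
      intro i hi
      have e1 : (m+1)+α+(i+1) = (m+α+i+1) + 1 := by omega
      rw [e1, Nat.choose_succ_succ (m+α+i+1) i]
      have e3 : (j'+1)+α = j'+(α+1) := by omega
      have e4 : (j'+1)-(i+1) = j'-i := by omega
      have e5 : m+(α+1)+i = m+α+i+1 := by omega
      have e6 : m+α+(i+1) = m+α+i+1 := by omega
      rw [e3, e4, e5, e6]
      push_cast
      ring
    rw [Finset.sum_congr rfl hsplit, Finset.sum_add_distrib]
    have hA : ∑ i ∈ range (j'+1),
        (-((-1:ℤ)^i * ((j'+(α+1)).choose (j'-i)) * ((m+(α+1)+i).choose i)))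
        = -((-1)^j' * (m.choose j')) := by
      rw [Finset.sum_neg_distrib, ih j' (α+1)]
    have hB := ih (j'+1) α
    rw [Finset.sum_range_succ'] at hB
    rw [add_right_comm, hA]
    simp only [Nat.choose_zero_right, Nat.cast_one, pow_zero, one_mul, mul_one,
      Nat.add_zero, Nat.sub_zero] at hB ⊢
    push_cast [Nat.choose_succ_succ m j'] at hB ⊢
    linear_combination hB

lemma Tsum (α m j : ℕ) :
    ∑ k ∈ range (j+1), (-1:ℝ)^k * ((j+α).choose (j-k) : ℝ) * ((m+α+k).factorial / k.factorial)
      = (-1)^j * (m+α).factorial * (m.choose j : ℝ) := by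
  have h : ∀ k ∈ range (j+1), (-1:ℝ)^k * ((j+α).choose (j-k) : ℝ) * ((m+α+k).factorial / k.factorial)
      = ((m+α).factorial : ℝ) * ((-1)^k * ((j+α).choose (j-k) : ℝ) * ((m+α+k).choose k : ℝ)) := by
    intro k hk
    have hfac : ((m+α+k).choose k : ℝ) * k.factorial * (m+α).factorial = (m+α+k).factorial := by
      have h2 := Nat.choose_mul_factorial_mul_factorial (Nat.le_add_left k (m+α))
      rw [show m+α+k-k = m+α by omega] at h2
      exact_mod_cast congrArg (Nat.cast : ℕ → ℝ) h2
    have hne : (k.factorial : ℝ) ≠ 0 := by exact_mod_cast k.factorial_ne_zero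
    field_simp
    rw [← hfac]; ring
  rw [Finset.sum_congr rfl h, ← Finset.mul_sum]
  have hZ := congrArg (Int.cast : ℤ → ℝ) (Scomb m j α)
  push_cast at hZ
  rw [hZ]
  ring

/-- `CC m j = choose m (j-1)` for `j ≥ 1`, else 0. -/
noncomputable def CC (m j : ℕ) : ℝ := if j = 0 then 0 else (m.choose (j-1) : ℝ)

lemma TsumK (α m j : ℕ) :
    ∑ k ∈ range (j+1), (-1:ℝ)^k * ((j+α).choose (j-k) : ℝ) *
        ((k:ℝ) * ((m+α+k).factorial / k.factorial))
      = (-1)^j * (m+α+1).factorial * CC m j := by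
  rcases j with _ | j'
  · simp [CC]
  · rw [Finset.sum_range_succ']
    have hcong : ∀ i ∈ range (j'+1),
        ((-1:ℝ)^(i+1) * (((j'+1)+α).choose ((j'+1)-(i+1)) : ℝ) *
          ((((i+1):ℕ):ℝ) * (((m+α+(i+1)).factorial : ℝ) / (((i+1):ℕ).factorial : ℝ))))
        = -((-1:ℝ)^i * ((j'+(α+1)).choose (j'-i) : ℝ) *
            (((m+(α+1)+i).factorial : ℝ) / (i.factorial : ℝ))) := by
      intro i hi
      have e1 : (j'+1)+α = j'+(α+1) := by omega
      have e2 : (j'+1)-(i+1) = j'-i := by omega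
      have e3 : m+α+(i+1) = m+(α+1)+i := by omega
      rw [e1, e2, e3, Nat.factorial_succ]
      have hne : (i.factorial : ℝ) ≠ 0 := by exact_mod_cast i.factorial_ne_zero
      have hne2 : ((i:ℝ)+1) ≠ 0 := by positivity
      push_cast
      field_simp
      ring
    rw [Finset.sum_congr rfl hcong, Finset.sum_neg_distrib, Tsum (α+1) m j']
    have e4 : m+(α+1) = m+α+1 := by omega
    rw [e4]
    simp [CC]
    ring

lemma binsum (a : ℝ) (m n : ℕ) (h : m < n) :
    ∑ j ∈ range n, a^j * (m.choose j : ℝ) = (1+a)^m := by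
  have hsub : range (m+1) ⊆ range n := by
    intro t ht; simp only [mem_range] at *; omega
  rw [← Finset.sum_subset hsub (fun t ht hnt => by
    simp only [mem_range] at ht hnt
    rw [Nat.choose_eq_zero_of_lt (by omega)]
    simp)]
  have := add_pow a 1 m
  simp only [one_pow, mul_one] at this
  rw [← this]
  ring_nf

lemma scalarId (c : ℝ) (hc : 0 < c) (a : ℝ) (ha : -1 < a) (αn m n : ℕ) (hmn : m + 2 ≤ n) :
    a/(1+a)*c * (((m+αn+1).factorial : ℝ) / (c/(1+a))^(m+αn+1+1))
    - m * (((m+αn).factorial : ℝ) / (c/(1+a))^(m+αn+1))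
    - (1+a)^(αn+1) * ∑ j ∈ range n, (-a)^j * ∑ k ∈ range (j+1),
        (-1:ℝ)^k * ((j+αn).choose (j-k) : ℝ) * c^k / k.factorial *
          (((k:ℝ)-m) * (((m+αn+k).factorial : ℝ) / c^(m+αn+k+1))) = 0 := by
  have h1a : (0:ℝ) < 1+a := by linarith
  have hcne : c ≠ 0 := ne_of_gt hc
  have h1ane : (1+a) ≠ 0 := ne_of_gt h1a
  have hinner : ∀ j ∈ range n,
      (∑ k ∈ range (j+1), (-1:ℝ)^k * ((j+αn).choose (j-k) : ℝ) * c^k / k.factorial *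
          (((k:ℝ)-m) * (((m+αn+k).factorial : ℝ) / c^(m+αn+k+1))))
      = (1/c^(m+αn+1)) * (((-1:ℝ)^j * (m+αn+1).factorial * CC m j)
          - (m:ℝ) * ((-1:ℝ)^j * (m+αn).factorial * (m.choose j : ℝ))) := by
    intro j _
    have hterm : ∀ k ∈ range (j+1),
        (-1:ℝ)^k * ((j+αn).choose (j-k) : ℝ) * c^k / k.factorial *
          (((k:ℝ)-m) * (((m+αn+k).factorial : ℝ) / c^(m+αn+k+1)))
        = (1/c^(m+αn+1)) * ((-1:ℝ)^k * ((j+αn).choose (j-k) : ℝ) *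
              ((k:ℝ) * (((m+αn+k).factorial : ℝ) / (k.factorial : ℝ)))
            - (m:ℝ) * ((-1:ℝ)^k * ((j+αn).choose (j-k) : ℝ) *
              (((m+αn+k).factorial : ℝ) / (k.factorial : ℝ)))) := by
      intro k _
      have e1 : m+αn+k+1 = k+(m+αn+1) := by omega
      rw [e1, pow_add]
      have hne : (k.factorial : ℝ) ≠ 0 := by exact_mod_cast k.factorial_ne_zero
      have hck : c^k ≠ 0 := pow_ne_zero _ hcne
      have hcP : c^(m+αn+1) ≠ 0 := pow_ne_zero _ hcne
      field_simp
    rw [Finset.sum_congr rfl hterm, ← Finset.mul_sum, Finset.sum_sub_distrib,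
      ← Finset.mul_sum, TsumK αn m j, Tsum αn m j]
  have houter : ∀ j ∈ range n,
      (-a)^j * (∑ k ∈ range (j+1), (-1:ℝ)^k * ((j+αn).choose (j-k) : ℝ) * c^k / k.factorial *
          (((k:ℝ)-m) * (((m+αn+k).factorial : ℝ) / c^(m+αn+k+1))))
      = (1/c^(m+αn+1)) * (((m+αn+1).factorial : ℝ) * (a^j * CC m j))
        - (1/c^(m+αn+1)) * ((m:ℝ) * ((m+αn).factorial : ℝ) * (a^j * (m.choose j : ℝ))) := by
    intro j hjm
    rw [hinner j hjm]
    have hj : (-a)^j * (-1:ℝ)^j = a^j := by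
      rw [← mul_pow]; norm_num
    linear_combination ((1/c^(m+αn+1)) * (((m+αn+1).factorial : ℝ) * CC m j
      - (m:ℝ) * ((m+αn).factorial : ℝ) * (m.choose j : ℝ))) * hj
  rw [Finset.sum_congr rfl houter, Finset.sum_sub_distrib, ← Finset.mul_sum, ← Finset.mul_sum,
    ← Finset.mul_sum, ← Finset.mul_sum]
  have SB : ∑ j ∈ range n, a^j * (m.choose j : ℝ) = (1+a)^m := binsum a m n (by omega)
  have SCC : ∑ j ∈ range n, a^j * CC m j = a * (1+a)^m := by
    obtain ⟨n', rfl⟩ : ∃ n', n = n'+1 := ⟨n-1, by omega⟩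
    rw [Finset.sum_range_succ']
    have h0 : a^0 * CC m 0 = 0 := by simp [CC]
    rw [h0, add_zero]
    have hc2 : ∀ i ∈ range n', a^(i+1) * CC m (i+1) = a * (a^i * (m.choose i : ℝ)) := by
      intro i _
      simp [CC, pow_succ]
      ring
    rw [Finset.sum_congr rfl hc2, ← Finset.mul_sum, binsum a m n' (by omega)]
  rw [SB, SCC]
  rw [div_pow, div_pow]
  field_simp
  ring
open MeasureTheory Finset

lemma integrableOn_pow_exp {b : ℝ} (hb : 0 < b) (n : ℕ) :
    IntegrableOn (fun x : ℝ => x ^ n * Real.exp (-b * x)) (Set.Ioi 0) := by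
  have h := integrableOn_rpow_mul_exp_neg_mul_rpow (p := 1) (s := n) (b := b)
    (lt_of_lt_of_le neg_one_lt_zero (Nat.cast_nonneg n)) one_pos hb
  apply h.congr_fun ?_ measurableSet_Ioi
  intro x hx
  simp only [Real.rpow_one, Real.rpow_natCast]

lemma integral_pow_exp {b : ℝ} (hb : 0 < b) (n : ℕ) :
    ∫ x in Set.Ioi (0:ℝ), x ^ n * Real.exp (-b * x) = n.factorial / b ^ (n + 1) := by
  rw [show (fun x : ℝ => x ^ n * Real.exp (-b * x))
      = fun x : ℝ => x ^ n * Real.exp (-(b * x)) from funext fun x => by rw [neg_mul]]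
  have h := Real.integral_rpow_mul_exp_neg_mul_Ioi (a := (n : ℝ) + 1) (r := b)
    (by positivity) hb
  rw [show ((n:ℝ) + 1 - 1) = (n:ℝ) by ring] at h
  rw [show (∫ x in Set.Ioi (0:ℝ), x ^ n * Real.exp (-(b * x)))
      = ∫ t in Set.Ioi (0:ℝ), t ^ (n:ℝ) * Real.exp (-(b * t)) from ?_, h]
  · rw [show ((n:ℝ) + 1) = ((n + 1 : ℕ) : ℝ) by push_cast; ring, Real.rpow_natCast,
      div_pow, one_pow]
    push_cast
    rw [Real.Gamma_nat_eq_factorial]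
    field_simp
  · refine setIntegral_congr_fun measurableSet_Ioi fun x hx => ?_
    rw [Real.rpow_natCast]


noncomputable def phiF (M N : ℕ) (a : ℝ) : ℝ → ℝ := fun x =>
  Real.exp (a / (1 + a) * (2 * (M : ℝ) * x)) -
    (1 + a) ^ (2 * (M - N) + 1) *
      ∑ j ∈ Finset.range (2 * N - 1),
        (-a) ^ j * genLaguerre j (2 * (M - N)) (2 * (M : ℝ) * x)

noncomputable def phiD (M N : ℕ) (a : ℝ) : ℝ → ℝ := fun x =>
  Real.exp (a / (1 + a) * (2 * (M : ℝ) * x)) * (a / (1 + a) * (2 * (M : ℝ))) -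
    (1 + a) ^ (2 * (M - N) + 1) *
      ∑ j ∈ Finset.range (2 * N - 1),
        (-a) ^ j *
          ∑ k ∈ Finset.range (j + 1),
            (-1 : ℝ) ^ k * ((j + 2 * (M - N)).choose (j - k) : ℝ) *
              ((k : ℝ) * (2 * (M : ℝ) * x) ^ (k - 1) * (2 * (M : ℝ))) / (k.factorial : ℝ)

lemma hlin (M : ℕ) (x : ℝ) : HasDerivAt (fun y : ℝ => 2 * (M : ℝ) * y) (2 * (M : ℝ)) x := by
  simpa using (hasDerivAt_id x).const_mul (2 * (M : ℝ))

lemma hasDerivAt_phiF (M N : ℕ) (a : ℝ) (x : ℝ) :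
    HasDerivAt (phiF M N a) (phiD M N a x) x := by
  unfold phiF phiD genLaguerre
  exact (((hlin M x).const_mul (a / (1 + a))).exp).sub
    ((HasDerivAt.fun_sum fun j _ =>
      (HasDerivAt.fun_sum fun k _ =>
        (((hlin M x).fun_pow k).const_mul
          ((-1 : ℝ) ^ k * ((j + 2 * (M - N)).choose (j - k) : ℝ))).div_const
            (k.factorial : ℝ)).const_mul ((-a) ^ j)).const_mul ((1 + a) ^ (2 * (M - N) + 1)))

noncomputable def TT (M N : ℕ) (a : ℝ) (m : ℕ) : ℝ → ℝ := fun x =>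
  a / (1 + a) * (2 * (M : ℝ)) *
      (x ^ (m + 2 * (M - N) + 1) * Real.exp (-(2 * (M : ℝ) / (1 + a)) * x)) -
    (m : ℝ) * (x ^ (m + 2 * (M - N)) * Real.exp (-(2 * (M : ℝ) / (1 + a)) * x)) -
    (1 + a) ^ (2 * (M - N) + 1) *
      ∑ j ∈ Finset.range (2 * N - 1),
        (-a) ^ j *
          ∑ k ∈ Finset.range (j + 1),
            (-1 : ℝ) ^ k * ((j + 2 * (M - N)).choose (j - k) : ℝ) * (2 * (M : ℝ)) ^ k /
                (k.factorial : ℝ) *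
              (((k : ℝ) - m) * (x ^ (m + 2 * (M - N) + k) * Real.exp (-(2 * (M : ℝ)) * x)))

lemma pointwiseEq (M N : ℕ) (a : ℝ) (ha : -1 < a) (m : ℕ) (x : ℝ) :
    (x ^ m * phiD M N a x - (m : ℝ) * x ^ (m - 1) * phiF M N a x) * x ^ (2 * (M - N) + 1) *
        Real.exp (-(2 * (M : ℝ)) * x) = TT M N a m x := by
  have h1a : (1 + a) ≠ 0 := by intro h; linarith [ha]
  have hexp : Real.exp (a / (1 + a) * (2 * (M : ℝ) * x)) * Real.exp (-(2 * (M : ℝ)) * x)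
      = Real.exp (-(2 * (M : ℝ) / (1 + a)) * x) := by
    rw [← Real.exp_add]
    congr 1
    field_simp
    ring
  have hm1 : (m : ℝ) * x ^ (m - 1) * x ^ (2 * (M - N) + 1)
      = (m : ℝ) * x ^ (m + 2 * (M - N)) := by
    rcases m with _ | m'
    · simp
    · push_cast [Nat.succ_sub_one]
      ring
  have hS : ∑ j ∈ Finset.range (2 * N - 1),
      (x ^ m * (x ^ (2 * (M - N) + 1) * Real.exp (-(2 * (M : ℝ)) * x)) *
          ((-a) ^ j * ∑ k ∈ Finset.range (j + 1),
            (-1 : ℝ) ^ k * ((j + 2 * (M - N)).choose (j - k) : ℝ) *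
              ((k : ℝ) * (2 * (M : ℝ) * x) ^ (k - 1) * (2 * (M : ℝ))) / (k.factorial : ℝ))
        - (m : ℝ) * x ^ (m - 1) * (x ^ (2 * (M - N) + 1) * Real.exp (-(2 * (M : ℝ)) * x)) *
          ((-a) ^ j * ∑ k ∈ Finset.range (j + 1),
            (-1 : ℝ) ^ k * ((j + 2 * (M - N)).choose (j - k) : ℝ) *
              (2 * (M : ℝ) * x) ^ k / (k.factorial : ℝ)))
      = ∑ j ∈ Finset.range (2 * N - 1),
        (-a) ^ j *
          ∑ k ∈ Finset.range (j + 1),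
            (-1 : ℝ) ^ k * ((j + 2 * (M - N)).choose (j - k) : ℝ) * (2 * (M : ℝ)) ^ k /
                (k.factorial : ℝ) *
              (((k : ℝ) - m) * (x ^ (m + 2 * (M - N) + k) * Real.exp (-(2 * (M : ℝ)) * x))) := by
    refine Finset.sum_congr rfl fun j _ => ?_
    simp only [Finset.mul_sum]
    rw [← Finset.sum_sub_distrib]
    refine Finset.sum_congr rfl fun k _ => ?_
    have hkf : (k.factorial : ℝ) ≠ 0 := by exact_mod_cast k.factorial_ne_zero
    rcases k with _ | k' <;> rcases m with _ | m' <;>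
      (push_cast [Nat.succ_sub_one, Nat.zero_sub] at hkf ⊢; field_simp; try ring)
  rw [Finset.sum_sub_distrib, ← Finset.mul_sum, ← Finset.mul_sum] at hS
  simp only [phiF, phiD, TT, genLaguerre]
  linear_combination (a / (1 + a) * (2 * (M : ℝ)) * x ^ (m + 2 * (M - N) + 1)
      - (m : ℝ) * x ^ (m + 2 * (M - N))) * hexp
    - (Real.exp (a / (1 + a) * (2 * (M : ℝ) * x)) * Real.exp (-(2 * (M : ℝ)) * x)) * hm1
    - (1 + a) ^ (2 * (M - N) + 1) * hS

lemma TT_integrable (M N : ℕ) (hN : 1 ≤ N) (hMN : N ≤ M) (a : ℝ) (ha : -1 < a) (m : ℕ) :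
    IntegrableOn (TT M N a m) (Set.Ioi 0) := by
  have hM1 : 1 ≤ M := le_trans hN hMN
  have hMR : (1:ℝ) ≤ (M:ℝ) := by exact_mod_cast hM1
  have h1a : (0:ℝ) < 1 + a := by linarith
  have hc : (0:ℝ) < 2*(M:ℝ) := by linarith
  have hb : (0:ℝ) < 2*(M:ℝ)/(1+a) := by positivity
  have i1 : IntegrableOn (fun x : ℝ => a / (1 + a) * (2 * (M : ℝ)) *
      (x ^ (m + 2 * (M - N) + 1) * Real.exp (-(2 * (M : ℝ) / (1 + a)) * x))) (Set.Ioi 0) :=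
    (integrableOn_pow_exp hb _).const_mul _
  have i2 : IntegrableOn (fun x : ℝ => (m : ℝ) *
      (x ^ (m + 2 * (M - N)) * Real.exp (-(2 * (M : ℝ) / (1 + a)) * x))) (Set.Ioi 0) :=
    (integrableOn_pow_exp hb _).const_mul _
  have ik : ∀ (j k : ℕ), IntegrableOn (fun x : ℝ =>
      (-1 : ℝ) ^ k * ((j + 2 * (M - N)).choose (j - k) : ℝ) * (2 * (M : ℝ)) ^ k /
          (k.factorial : ℝ) *
        (((k : ℝ) - m) * (x ^ (m + 2 * (M - N) + k) * Real.exp (-(2 * (M : ℝ)) * x))))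
      (Set.Ioi 0) :=
    fun j k => ((integrableOn_pow_exp hc _).const_mul _).const_mul _
  have ij : ∀ (j : ℕ), IntegrableOn (fun x : ℝ => (-a) ^ j *
      ∑ k ∈ Finset.range (j + 1),
        (-1 : ℝ) ^ k * ((j + 2 * (M - N)).choose (j - k) : ℝ) * (2 * (M : ℝ)) ^ k /
            (k.factorial : ℝ) *
          (((k : ℝ) - m) * (x ^ (m + 2 * (M - N) + k) * Real.exp (-(2 * (M : ℝ)) * x))))
      (Set.Ioi 0) :=
    fun j => (integrable_finset_sum _ fun k _ => ik j k).const_mul _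
  have i3 : IntegrableOn (fun x : ℝ => (1 + a) ^ (2 * (M - N) + 1) *
      ∑ j ∈ Finset.range (2 * N - 1), (-a) ^ j *
        ∑ k ∈ Finset.range (j + 1),
          (-1 : ℝ) ^ k * ((j + 2 * (M - N)).choose (j - k) : ℝ) * (2 * (M : ℝ)) ^ k /
              (k.factorial : ℝ) *
            (((k : ℝ) - m) * (x ^ (m + 2 * (M - N) + k) * Real.exp (-(2 * (M : ℝ)) * x))))
      (Set.Ioi 0) :=
    (integrable_finset_sum _ fun j _ => ij j).const_mul _
  exact (i1.sub i2).sub i3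

lemma TT_integral (M N : ℕ) (hN : 1 ≤ N) (hMN : N ≤ M) (a : ℝ) (ha : -1 < a) (m : ℕ)
    (hm : m < 2*N-2) :
    ∫ x in Set.Ioi (0:ℝ), TT M N a m x = 0 := by
  have hM1 : 1 ≤ M := le_trans hN hMN
  have hMR : (1:ℝ) ≤ (M:ℝ) := by exact_mod_cast hM1
  have h1a : (0:ℝ) < 1 + a := by linarith
  have hc : (0:ℝ) < 2*(M:ℝ) := by linarith
  have hb : (0:ℝ) < 2*(M:ℝ)/(1+a) := by positivity
  have i1 : IntegrableOn (fun x : ℝ => a / (1 + a) * (2 * (M : ℝ)) *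
      (x ^ (m + 2 * (M - N) + 1) * Real.exp (-(2 * (M : ℝ) / (1 + a)) * x))) (Set.Ioi 0) :=
    (integrableOn_pow_exp hb _).const_mul _
  have i2 : IntegrableOn (fun x : ℝ => (m : ℝ) *
      (x ^ (m + 2 * (M - N)) * Real.exp (-(2 * (M : ℝ) / (1 + a)) * x))) (Set.Ioi 0) :=
    (integrableOn_pow_exp hb _).const_mul _
  have ik : ∀ (j k : ℕ), IntegrableOn (fun x : ℝ =>
      (-1 : ℝ) ^ k * ((j + 2 * (M - N)).choose (j - k) : ℝ) * (2 * (M : ℝ)) ^ k /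
          (k.factorial : ℝ) *
        (((k : ℝ) - m) * (x ^ (m + 2 * (M - N) + k) * Real.exp (-(2 * (M : ℝ)) * x))))
      (Set.Ioi 0) :=
    fun j k => ((integrableOn_pow_exp hc _).const_mul _).const_mul _
  have ij : ∀ (j : ℕ), IntegrableOn (fun x : ℝ => (-a) ^ j *
      ∑ k ∈ Finset.range (j + 1),
        (-1 : ℝ) ^ k * ((j + 2 * (M - N)).choose (j - k) : ℝ) * (2 * (M : ℝ)) ^ k /
            (k.factorial : ℝ) *
          (((k : ℝ) - m) * (x ^ (m + 2 * (M - N) + k) * Real.exp (-(2 * (M : ℝ)) * x))))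
      (Set.Ioi 0) :=
    fun j => (integrable_finset_sum _ fun k _ => ik j k).const_mul _
  have i3 : IntegrableOn (fun x : ℝ => (1 + a) ^ (2 * (M - N) + 1) *
      ∑ j ∈ Finset.range (2 * N - 1), (-a) ^ j *
        ∑ k ∈ Finset.range (j + 1),
          (-1 : ℝ) ^ k * ((j + 2 * (M - N)).choose (j - k) : ℝ) * (2 * (M : ℝ)) ^ k /
              (k.factorial : ℝ) *
            (((k : ℝ) - m) * (x ^ (m + 2 * (M - N) + k) * Real.exp (-(2 * (M : ℝ)) * x))))
      (Set.Ioi 0) :=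
    (integrable_finset_sum _ fun j _ => ij j).const_mul _
  have i12 : IntegrableOn (fun x : ℝ => a / (1 + a) * (2 * (M : ℝ)) *
      (x ^ (m + 2 * (M - N) + 1) * Real.exp (-(2 * (M : ℝ) / (1 + a)) * x)) -
      (m : ℝ) * (x ^ (m + 2 * (M - N)) * Real.exp (-(2 * (M : ℝ) / (1 + a)) * x)))
      (Set.Ioi 0) := by exact i1.sub i2
  unfold TT
  rw [MeasureTheory.integral_sub i12 i3, MeasureTheory.integral_sub i1 i2,
    MeasureTheory.integral_const_mul, MeasureTheory.integral_const_mul,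
    MeasureTheory.integral_const_mul,
    MeasureTheory.integral_finset_sum _ (fun j _ => ij j)]
  have hj : ∀ j ∈ Finset.range (2 * N - 1),
      (∫ x in Set.Ioi (0:ℝ), (-a) ^ j *
        ∑ k ∈ Finset.range (j + 1),
          (-1 : ℝ) ^ k * ((j + 2 * (M - N)).choose (j - k) : ℝ) * (2 * (M : ℝ)) ^ k /
              (k.factorial : ℝ) *
            (((k : ℝ) - m) * (x ^ (m + 2 * (M - N) + k) * Real.exp (-(2 * (M : ℝ)) * x))))
      = (-a) ^ j * ∑ k ∈ Finset.range (j + 1),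
          (-1 : ℝ) ^ k * ((j + 2 * (M - N)).choose (j - k) : ℝ) * (2 * (M : ℝ)) ^ k /
              (k.factorial : ℝ) *
            (((k : ℝ) - m) * (((m + 2 * (M - N) + k).factorial : ℝ) /
              (2 * (M : ℝ)) ^ (m + 2 * (M - N) + k + 1))) := by
    intro j _
    rw [MeasureTheory.integral_const_mul,
      MeasureTheory.integral_finset_sum _ (fun k _ => ik j k)]
    congr 1
    refine Finset.sum_congr rfl fun k _ => ?_
    rw [MeasureTheory.integral_const_mul, MeasureTheory.integral_const_mul,
      integral_pow_exp hc]
  rw [Finset.sum_congr rfl hj, integral_pow_exp hb, integral_pow_exp hb]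
  exact scalarId (2*(M:ℝ)) hc a ha (2*(M-N)) m (2*N-1) (by omega)

lemma keyMono (M N : ℕ) (hN : 1 ≤ N) (hMN : N ≤ M) (a : ℝ) (ha : -1 < a) (mm : ℕ)
    (hm : mm < 2*N-2) :
    ∫ x in Set.Ioi (0:ℝ), (x ^ mm * phiD M N a x - (mm : ℝ) * x ^ (mm - 1) * phiF M N a x) *
      x ^ (2 * (M - N) + 1) * Real.exp (-(2 * (M : ℝ)) * x) = 0 := by
  rw [show (fun x : ℝ => (x ^ mm * phiD M N a x - (mm : ℝ) * x ^ (mm - 1) * phiF M N a x) *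
      x ^ (2 * (M - N) + 1) * Real.exp (-(2 * (M : ℝ)) * x)) = TT M N a mm from
    funext (pointwiseEq M N a ha mm)]
  exact TT_integral M N hN hMN a ha mm hm

lemma keyMonoInt (M N : ℕ) (hN : 1 ≤ N) (hMN : N ≤ M) (a : ℝ) (ha : -1 < a) (mm : ℕ) :
    IntegrableOn (fun x : ℝ =>
      (x ^ mm * phiD M N a x - (mm : ℝ) * x ^ (mm - 1) * phiF M N a x) *
        x ^ (2 * (M - N) + 1) * Real.exp (-(2 * (M : ℝ)) * x)) (Set.Ioi 0) := by
  rw [show (fun x : ℝ => (x ^ mm * phiD M N a x - (mm : ℝ) * x ^ (mm - 1) * phiF M N a x) *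
      x ^ (2 * (M - N) + 1) * Real.exp (-(2 * (M : ℝ)) * x)) = TT M N a mm from
    funext (pointwiseEq M N a ha mm)]
  exact TT_integrable M N hN hMN a ha mm


lemma reduce (M N : ℕ) (hN : 1 ≤ N) (hMN : N ≤ M) (a : ℝ) (ha : -1 < a) (r : ℕ → ℝ) (n : ℕ)
    (hz : ∀ mm < n, ∫ x in Set.Ioi (0:ℝ),
      (x ^ mm * phiD M N a x - (mm : ℝ) * x ^ (mm - 1) * phiF M N a x) *
        x ^ (2 * (M - N) + 1) * Real.exp (-(2 * (M : ℝ)) * x) = 0) :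
    ∫ x in Set.Ioi (0:ℝ),
      ((∑ mm ∈ Finset.range n, r mm * x ^ mm) * phiD M N a x -
          (∑ mm ∈ Finset.range n, r mm * ((mm : ℝ) * x ^ (mm - 1))) * phiF M N a x) *
        x ^ (2 * (M - N) + 1) * Real.exp (-(2 * (M : ℝ)) * x) = 0 := by
  have hfun : (fun x : ℝ =>
      ((∑ mm ∈ Finset.range n, r mm * x ^ mm) * phiD M N a x -
          (∑ mm ∈ Finset.range n, r mm * ((mm : ℝ) * x ^ (mm - 1))) * phiF M N a x) *
        x ^ (2 * (M - N) + 1) * Real.exp (-(2 * (M : ℝ)) * x))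
      = fun x : ℝ => ∑ mm ∈ Finset.range n, r mm *
          ((x ^ mm * phiD M N a x - (mm : ℝ) * x ^ (mm - 1) * phiF M N a x) *
            x ^ (2 * (M - N) + 1) * Real.exp (-(2 * (M : ℝ)) * x)) := by
    funext x
    rw [Finset.sum_mul, Finset.sum_mul, ← Finset.sum_sub_distrib, Finset.sum_mul,
      Finset.sum_mul]
    exact Finset.sum_congr rfl fun mm _ => by ring
  rw [hfun, MeasureTheory.integral_finset_sum _
    (fun mm _ => (keyMonoInt M N hN hMN a ha mm).const_mul (r mm))]
  refine Finset.sum_eq_zero fun mm hmm => ?_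
  rw [MeasureTheory.integral_const_mul, hz mm (Finset.mem_range.mp hmm), mul_zero]

/-- The function `φ_{2N-1}(x) = e^{(a/(1+a))2Mx}
  - (1+a)^{2(M-N)+1} ∑_{j=0}^{2N-2} (-a)^j L_j^{(2(M-N))}(2Mx)`
is skew-orthogonal to every polynomial of degree at most `2N-3`
(i.e. of degree `< 2N-2`). -/
theorem stmt_16 (M N : ℕ) (hN : 1 ≤ N) (hMN : N ≤ M) (a : ℝ) (ha : -1 < a)
    (p : Polynomial ℝ) (hp : p.degree < ((2 * N - 2 : ℕ) : WithBot ℕ)) :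
    skewInner M N (fun x => p.eval x)
      (fun x =>
        Real.exp (a / (1 + a) * (2 * (M : ℝ) * x)) -
          (1 + a) ^ (2 * (M - N) + 1) *
            ∑ j ∈ Finset.range (2 * N - 1),
              (-a) ^ j * genLaguerre j (2 * (M - N)) (2 * (M : ℝ) * x)) = 0 := by
  by_cases hp0 : p = 0
  · simp [skewInner, hp0]
  · have hdeg : p.natDegree < 2 * N - 2 :=
      (Polynomial.natDegree_lt_iff_degree_lt hp0).mpr hp
    show skewInner M N (fun x => p.eval x) (phiF M N a) = 0
    rw [show (fun x : ℝ => p.eval x)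
        = fun x : ℝ => ∑ mm ∈ Finset.range (2 * N - 2), p.coeff mm * x ^ mm from
      funext fun x => Polynomial.eval_eq_sum_range' hdeg x]
    unfold skewInner
    have hg : deriv (phiF M N a) = phiD M N a :=
      funext fun x => (hasDerivAt_phiF M N a x).deriv
    have hf : deriv (fun x : ℝ => ∑ mm ∈ Finset.range (2 * N - 2), p.coeff mm * x ^ mm)
        = fun x : ℝ => ∑ mm ∈ Finset.range (2 * N - 2), p.coeff mm * ((mm : ℝ) * x ^ (mm - 1)) :=
      funext fun x =>
        (HasDerivAt.fun_sum fun mm _ => (hasDerivAt_pow mm x).const_mul (p.coeff mm)).deriv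
    rw [hg, hf]
    exact reduce M N hN hMN a ha p.coeff (2 * N - 2)
      (fun mm hmm => keyMono M N hN hMN a ha mm hmm)
end

section
/- Let M ≥ N ≥ 1 be integers and a > −1 a real number. Let c be a complex number and R > 0 be such that |1 − c| < R, |1/(1+a) − c| < R, and |c| > R (so the positively oriented circle of center c and radius R encloses 1 and 1/(1+a) but not 0). Then for every real x, exp((a/(1+a))·2Mx) − (1+a)^{2(M−N)+1} · Σ_{j=0}^{2N−2} (−a)^j · L_j^{(2(M−N))}(2Mx) = −(1+a)^{2(M−N)+1} · a^{2N−1} · (e^{2Mx}/(2πi)) · ∮_{|z−c|=R} e^{−2Mxz} · z^{2M−1} / ( (z−1)^{2N−1} · ((1+a)z − 1) ) dz. -/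
open MeasureTheory

lemma auxSum {ι : Type*} (s : Finset ι) (f : ι → ℂ → ℂ) (c : ℂ) (R : ℝ)
    (h : ∀ i ∈ s, CircleIntegrable (f i) c R) :
    (∮ z in C(c, R), ∑ i ∈ s, f i z) = ∑ i ∈ s, ∮ z in C(c, R), f i z := by
  simp only [circleIntegral, Finset.smul_sum]
  exact intervalIntegral.integral_finset_sum fun i hi => (h i hi).out

lemma auxSphereNe {c : ℂ} {R : ℝ} {w : ℂ} (hw : w ∈ Metric.ball c R) :
    ∀ z ∈ Metric.sphere c R, z ≠ w := by
  intro z hz hzw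
  rw [Metric.mem_sphere] at hz
  rw [Metric.mem_ball] at hw
  rw [hzw] at hz
  exact absurd hz (ne_of_lt hw)

lemma auxCont {c : ℂ} {R : ℝ} (T : ℂ)
    (hs : ∀ z ∈ Metric.sphere c R, z ≠ (1:ℂ)) (m : ℤ) :
    ContinuousOn (fun z => Complex.exp (-T * z) * (z - 1) ^ m) (Metric.sphere c R) := by
  refine ContinuousOn.mul ?_ ?_
  · exact (Complex.continuous_exp.comp (continuous_const.mul continuous_id)).continuousOn
  · exact (continuousOn_id.sub continuousOn_const).zpow₀ m
      (fun z hz => Or.inl (sub_ne_zero.2 (hs z hz)))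

lemma auxDelta {c : ℂ} {R : ℝ} (T : ℂ) (h1 : (1:ℂ) ∈ Metric.ball c R) (k : ℕ) :
    (∮ z in C(c, R), Complex.exp (-T * z) * (z - 1) ^ (-(k + 1) : ℤ)) =
      2 * Real.pi * Complex.I * Complex.exp (-T) * (-T) ^ k / (k.factorial : ℂ) := by
  have hR : 0 < R := lt_of_le_of_lt dist_nonneg (Metric.mem_ball.mp h1)
  have hs : ∀ z ∈ Metric.sphere c R, z ≠ (1:ℂ) := auxSphereNe h1
  induction k with
  | zero =>
    have hfd : Differentiable ℂ (fun z : ℂ => Complex.exp (-T * z)) :=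
      (differentiable_id.const_mul (-T)).cexp
    have hC := DiffContOnCl.circleIntegral_sub_inv_smul
      (f := fun z : ℂ => Complex.exp (-T * z)) (hfd.diffContOnCl) h1
    have heq : (∮ z in C(c, R), Complex.exp (-T * z) * (z - 1) ^ (-((0:ℕ) + 1) : ℤ)) =
        ∮ z in C(c, R), (z - 1)⁻¹ • Complex.exp (-T * z) := by
      refine circleIntegral.integral_congr hR.le (fun z hz => ?_)
      simp only [smul_eq_mul]
      rw [show (-(((0:ℕ):ℤ)+1) : ℤ) = -1 by norm_num, zpow_neg_one]
      ring
    rw [heq, hC, smul_eq_mul]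
    norm_num
  | succ k ih =>
    have hder : ∀ z ∈ Metric.sphere c R, HasDerivWithinAt
        (fun w => Complex.exp (-T * w) * (w - 1) ^ (-(k + 1) : ℤ))
        ((-T * (Complex.exp (-T * z) * (z - 1) ^ (-(k + 1) : ℤ)) -
          ((k : ℂ) + 1) * (Complex.exp (-T * z) * (z - 1) ^ (-(k + 1 + 1) : ℤ))))
        (Metric.sphere c R) z := by
      intro z hz
      have hz1 : z - 1 ≠ 0 := sub_ne_zero.2 (hs z hz)
      have he : HasDerivAt (fun w : ℂ => Complex.exp (-T * w))
          (Complex.exp (-T * z) * (-T)) z := by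
        simpa using ((hasDerivAt_id z).const_mul (-T)).cexp
      have hp : HasDerivAt (fun w : ℂ => (w - 1) ^ (-(k + 1) : ℤ))
          (((-(k + 1) : ℤ) : ℂ) * (z - 1) ^ ((-(k + 1) : ℤ) - 1)) z := by
        simpa [Function.comp_def] using (hasDerivAt_zpow (-(k + 1) : ℤ) (z - 1) (Or.inl hz1)).comp z
          ((hasDerivAt_id z).sub_const 1)
      refine HasDerivAt.hasDerivWithinAt ?_
      refine (he.mul hp).congr_deriv ?_
      rw [show ((-(k + 1) : ℤ) - 1) = (-(k + 1 + 1) : ℤ) by ring]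
      push_cast
      ring
    have hzero := circleIntegral.integral_eq_zero_of_hasDerivWithinAt hR.le hder
    rw [show (-(↑(k+1) + 1) : ℤ) = (-(↑k + 1 + 1) : ℤ) by push_cast; ring]
    obtain ⟨X, hX⟩ : ∃ X, X = ∮ z in C(c, R), Complex.exp (-T * z) * (z - 1) ^ (-(↑k + 1 + 1) : ℤ) :=
      ⟨_, rfl⟩
    rw [← hX]
    have hi1 : CircleIntegrable
        (fun z => -T * (Complex.exp (-T * z) * (z - 1) ^ (-(k + 1) : ℤ))) c R :=
      ContinuousOn.circleIntegrable hR.le (continuousOn_const.mul (auxCont T hs _))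
    have hi2 : CircleIntegrable
        (fun z => ((k : ℂ) + 1) * (Complex.exp (-T * z) * (z - 1) ^ (-(k + 1 + 1) : ℤ))) c R :=
      ContinuousOn.circleIntegrable hR.le (continuousOn_const.mul (auxCont T hs _))
    rw [circleIntegral.integral_sub hi1 hi2, circleIntegral.integral_const_mul,
      circleIntegral.integral_const_mul, ih, ← hX, sub_eq_zero] at hzero
    have hk1 : ((k : ℂ) + 1) ≠ 0 := by
      have := Nat.cast_add_one_ne_zero (R := ℂ) k
      simpa using this
    have hfac : ((k.factorial : ℂ)) ≠ 0 := by
      exact_mod_cast Nat.cast_ne_zero.mpr k.factorial_ne_zero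
    rw [Nat.factorial_succ]
    push_cast
    field_simp at hzero ⊢
    linear_combination (-1 : ℂ) * hzero

lemma auxZero {c : ℂ} {R : ℝ} (hR : 0 ≤ R) (T : ℂ) (m : ℤ) (hm : 0 ≤ m) :
    (∮ z in C(c, R), Complex.exp (-T * z) * (z - 1) ^ m) = 0 := by
  obtain ⟨s, rfl⟩ := Int.eq_ofNat_of_zero_le hm
  have hd : Differentiable ℂ (fun z : ℂ => Complex.exp (-T * z) * (z - 1) ^ (s : ℕ)) :=
    ((differentiable_id.const_mul (-T)).cexp).mul ((differentiable_id.sub_const 1).pow _)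
  have heq : (fun z : ℂ => Complex.exp (-T * z) * (z - 1) ^ ((s : ℕ) : ℤ)) =
      fun z : ℂ => Complex.exp (-T * z) * (z - 1) ^ (s : ℕ) := by
    funext z; rw [zpow_natCast]
  rw [heq]
  exact Complex.circleIntegral_eq_zero_of_differentiable_on_off_countable hR
    Set.countable_empty hd.continuous.continuousOn (fun z _ => hd.differentiableAt)

lemma auxPow {c : ℂ} {R : ℝ} (T : ℂ) (h1 : (1:ℂ) ∈ Metric.ball c R) (p j : ℕ) :
    (∮ z in C(c, R), Complex.exp (-T * z) * z ^ p / (z - 1) ^ (j + 1)) =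
      2 * Real.pi * Complex.I * Complex.exp (-T) *
        ∑ i ∈ Finset.range (j + 1), (p.choose (j - i) : ℂ) * (-T) ^ i / (i.factorial : ℂ) := by
  have hR : 0 < R := lt_of_le_of_lt dist_nonneg (Metric.mem_ball.mp h1)
  have hs : ∀ z ∈ Metric.sphere c R, z ≠ (1:ℂ) := auxSphereNe h1
  have hpt : Set.EqOn (fun z => Complex.exp (-T * z) * z ^ p / (z - 1) ^ (j + 1))
      (fun z => ∑ s ∈ Finset.range (p + 1),
        (p.choose s : ℂ) * (Complex.exp (-T * z) * (z - 1) ^ ((s : ℤ) - (j + 1))))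
      (Metric.sphere c R) := by
    intro z hz
    have hz1 : z - 1 ≠ 0 := sub_ne_zero.2 (hs z hz)
    have hzp : (z : ℂ) ^ p = ∑ s ∈ Finset.range (p + 1), (z - 1) ^ s * (p.choose s : ℂ) := by
      conv_lhs => rw [show z = z - 1 + 1 by ring]
      rw [add_pow]
      simp
    simp only
    rw [hzp, Finset.mul_sum, Finset.sum_div]
    refine Finset.sum_congr rfl fun s _ => ?_
    rw [zpow_sub₀ hz1, zpow_natCast,
      show ((j : ℤ) + 1) = ((j + 1 : ℕ) : ℤ) by push_cast; ring, zpow_natCast]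
    field_simp
  rw [circleIntegral.integral_congr hR.le hpt,
    auxSum _ (fun s z => (p.choose s : ℂ) * (Complex.exp (-T * z) * (z - 1) ^ ((s : ℤ) - (j + 1)))) _ _ (fun s _ => ContinuousOn.circleIntegrable hR.le
      (continuousOn_const.mul (auxCont T hs _)))]
  simp only [circleIntegral.integral_const_mul]
  have hstep1 : (∑ s ∈ Finset.range (p + 1), (p.choose s : ℂ) *
        ∮ z in C(c, R), Complex.exp (-T * z) * (z - 1) ^ ((s : ℤ) - (j + 1))) =
      ∑ s ∈ Finset.range (p + 1 + (j + 1)), (p.choose s : ℂ) *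
        ∮ z in C(c, R), Complex.exp (-T * z) * (z - 1) ^ ((s : ℤ) - (j + 1)) := by
    refine Finset.sum_subset (Finset.range_subset_range.2 (by omega)) fun s hs1 hs2 => ?_
    have hps : p < s := by
      simp only [Finset.mem_range] at hs1 hs2; omega
    simp [Nat.choose_eq_zero_of_lt hps]
  have hstep2 : (∑ s ∈ Finset.range (p + 1 + (j + 1)), (p.choose s : ℂ) *
        ∮ z in C(c, R), Complex.exp (-T * z) * (z - 1) ^ ((s : ℤ) - (j + 1))) =
      ∑ s ∈ Finset.range (j + 1), (p.choose s : ℂ) *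
        ∮ z in C(c, R), Complex.exp (-T * z) * (z - 1) ^ ((s : ℤ) - (j + 1)) := by
    refine (Finset.sum_subset (Finset.range_subset_range.2 (by omega)) fun s hs1 hs2 => ?_).symm
    have hjs : j + 1 ≤ s := by
      simp only [Finset.mem_range] at hs1 hs2; omega
    rw [auxZero hR.le T _ (by omega), mul_zero]
  rw [hstep1, hstep2,
    ← Finset.sum_range_reflect
      (fun i => (p.choose (j - i) : ℂ) * (-T) ^ i / (i.factorial : ℂ)) (j + 1),
    Finset.mul_sum]
  refine Finset.sum_congr rfl fun s hs' => ?_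
  have hsj : s ≤ j := by simp only [Finset.mem_range] at hs'; omega
  rw [show ((s : ℤ) - ((j : ℤ) + 1)) = -((((j - s : ℕ) : ℤ)) + 1) by omega,
    auxDelta T h1 (j - s), show j + 1 - 1 - s = j - s by omega,
    show j - (j - s) = s by omega]
  ring

lemma auxGeom (b e : ℂ) (α : ℕ) (n : ℕ) (z : ℂ) (hz : z ≠ 1)
    (hb : (1 + b) * z - 1 ≠ 0) :
    (∑ j ∈ Finset.range n, (-b) ^ j * (e * z ^ (α + j) / (z - 1) ^ (j + 1))) =
      e * z ^ α / ((1 + b) * z - 1) -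
        (-b) ^ n * (e * z ^ (α + n) / ((z - 1) ^ n * ((1 + b) * z - 1))) := by
  have hz1 : z - 1 ≠ 0 := sub_ne_zero.2 hz
  induction n with
  | zero => simp
  | succ n ih =>
    rw [Finset.sum_range_succ, ih]
    have hzn : (z - 1) ^ n ≠ 0 := pow_ne_zero _ hz1
    field_simp
    ring

/-- The contour-integral representation of the last skew-orthogonal function `φ_{2N-1}`
in the rank-one quaternionic spiked Wishart model: for any circle (center `c`, radius
`R`) enclosing `1` and `1/(1+a)` but not `0`, and any real `x`,
`φ_{2N-1}(x) = -(1+a)^{2(M-N)+1} a^{2N-1} (e^{2Mx}/(2πi))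
  ∮ e^{-2Mxz} z^{2M-1} / ((z-1)^{2N-1} ((1+a)z - 1)) dz`. -/
theorem stmt_18 (M N : ℕ) (hN : 1 ≤ N) (hMN : N ≤ M) (a : ℝ) (ha : -1 < a)
    (c : ℂ) (R : ℝ) (h1 : ‖1 - c‖ < R)
    (h2 : ‖1 / (1 + (a : ℂ)) - c‖ < R)
    (h0 : R < ‖c‖) (x : ℝ) :
    ((Real.exp (a / (1 + a) * (2 * (M : ℝ) * x)) -
        (1 + a) ^ (2 * (M - N) + 1) *
          ∑ j ∈ Finset.range (2 * N - 1),
            (-a) ^ j * genLaguerre j (2 * (M - N)) (2 * (M : ℝ) * x) : ℝ) : ℂ)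
      = -(1 + (a : ℂ)) ^ (2 * (M - N) + 1) * (a : ℂ) ^ (2 * N - 1) *
          (Complex.exp (2 * (M : ℂ) * (x : ℂ)) / (2 * (Real.pi : ℂ) * Complex.I)) *
          ∮ z in C(c, R),
            Complex.exp (-(2 * (M : ℂ) * (x : ℂ)) * z) * z ^ (2 * M - 1) /
              ((z - 1) ^ (2 * N - 1) * ((1 + (a : ℂ)) * z - 1)) := by
  have ha1 : (0:ℝ) < 1 + a := by linarith
  have hA : (1 + (a:ℂ)) ≠ 0 := by
    intro h
    have h' : ((1 + a : ℝ) : ℂ) = 0 := by push_cast; linear_combination h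
    rw [Complex.ofReal_eq_zero] at h'
    exact ha1.ne' h'
  have hball1 : (1:ℂ) ∈ Metric.ball c R := by
    rw [Metric.mem_ball, Complex.dist_eq]; exact h1
  have hballw : 1 / (1 + (a:ℂ)) ∈ Metric.ball c R := by
    rw [Metric.mem_ball, Complex.dist_eq]; exact h2
  have hR : 0 < R := lt_of_le_of_lt dist_nonneg (Metric.mem_ball.mp hball1)
  have hs1 : ∀ z ∈ Metric.sphere c R, z ≠ (1:ℂ) := auxSphereNe hball1
  have hsw : ∀ z ∈ Metric.sphere c R, z ≠ 1 / (1 + (a:ℂ)) := auxSphereNe hballw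
  have hsB : ∀ z ∈ Metric.sphere c R, (1 + (a:ℂ)) * z - 1 ≠ 0 := by
    intro z hz h
    apply hsw z hz
    field_simp
    linear_combination h
  set T : ℂ := 2 * (M:ℂ) * (x:ℂ) with hT
  set A : ℂ := 1 + (a:ℂ) with hAdef
  have hαn : 2*(M-N) + (2*N - 1) = 2*M - 1 := by omega
  have hodd : Odd (2*N - 1) := Nat.odd_iff.mpr (by omega)
  -- continuity facts
  have hce : ContinuousOn (fun z : ℂ => Complex.exp (-T * z)) (Metric.sphere c R) :=
    (Complex.continuous_exp.comp (continuous_const.mul continuous_id)).continuousOn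
  have hGc : ∀ j : ℕ, ContinuousOn
      (fun z : ℂ => Complex.exp (-T * z) * z ^ (2*(M-N) + j) / (z - 1) ^ (j + 1))
      (Metric.sphere c R) := fun j =>
    (hce.mul (continuous_pow _).continuousOn).div
      ((continuousOn_id.sub continuousOn_const).pow _)
      (fun z hz => pow_ne_zero _ (sub_ne_zero.2 (hs1 z hz)))
  have hSc : ContinuousOn
      (fun z : ℂ => Complex.exp (-T * z) * z ^ (2*(M-N)) / (A * z - 1))
      (Metric.sphere c R) :=
    (hce.mul (continuous_pow _).continuousOn).div
      ((continuousOn_const.mul continuousOn_id).sub continuousOn_const)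
      (fun z hz => hsB z hz)
  have hBc : ContinuousOn
      (fun z : ℂ => Complex.exp (-T * z) * z ^ (2*(M-N) + (2*N-1)) /
        ((z - 1) ^ (2*N-1) * (A * z - 1)))
      (Metric.sphere c R) :=
    (hce.mul (continuous_pow _).continuousOn).div
      (((continuousOn_id.sub continuousOn_const).pow _).mul
        ((continuousOn_const.mul continuousOn_id).sub continuousOn_const))
      (fun z hz => mul_ne_zero (pow_ne_zero _ (sub_ne_zero.2 (hs1 z hz))) (hsB z hz))
  -- the key identity from the geometric expansion
  have hkey : (∑ j ∈ Finset.range (2*N-1), (-(a:ℂ))^j *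
        ∮ z in C(c,R), Complex.exp (-T*z) * z^(2*(M-N) + j) / (z-1)^(j+1))
      = (∮ z in C(c,R), Complex.exp (-T*z) * z^(2*(M-N)) / (A*z - 1))
        - (-(a:ℂ))^(2*N-1) *
          ∮ z in C(c,R), Complex.exp (-T*z) * z^(2*(M-N) + (2*N-1)) /
            ((z-1)^(2*N-1) * (A*z-1)) := by
    have hsum := auxSum (Finset.range (2*N-1))
      (fun j z => (-(a:ℂ))^j * (Complex.exp (-T*z) * z^(2*(M-N) + j) / (z-1)^(j+1))) c R
      (fun j _ => ContinuousOn.circleIntegrable hR.le (continuousOn_const.mul (hGc j)))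
    simp only [circleIntegral.integral_const_mul] at hsum
    rw [← hsum]
    rw [circleIntegral.integral_congr hR.le (fun z hz =>
      auxGeom (a:ℂ) (Complex.exp (-T*z)) (2*(M-N)) (2*N-1) z (hs1 z hz) (hsB z hz))]
    rw [circleIntegral.integral_sub (f := fun z => Complex.exp (-T*z) * z^(2*(M-N)) / (A*z - 1))
      (g := fun z => (-(a:ℂ))^(2*N-1) * (Complex.exp (-T*z) * z^(2*(M-N) + (2*N-1)) /
        ((z-1)^(2*N-1) * (A*z-1))))
      (ContinuousOn.circleIntegrable hR.le hSc)
      (ContinuousOn.circleIntegrable hR.le (continuousOn_const.mul hBc)),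
      circleIntegral.integral_const_mul]
  -- evaluate the G integrals
  have hGval : ∀ j : ℕ,
      (∮ z in C(c,R), Complex.exp (-T*z) * z^(2*(M-N) + j) / (z-1)^(j+1)) =
        2 * Real.pi * Complex.I * Complex.exp (-T) *
          ∑ i ∈ Finset.range (j+1), ((2*(M-N)+j).choose (j-i) : ℂ) * (-T)^i /
            (i.factorial : ℂ) :=
    fun j => auxPow T hball1 (2*(M-N)+j) j
  -- evaluate the simple-pole integral
  have hQ : (∮ z in C(c,R), Complex.exp (-T*z) * z^(2*(M-N)) / (A*z - 1)) =
      2 * Real.pi * Complex.I *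
        (Complex.exp (-T * (1/A)) * (1/A)^(2*(M-N)) / A) := by
    have hfd : Differentiable ℂ (fun z : ℂ => Complex.exp (-T*z) * z^(2*(M-N)) / A) :=
      (((differentiable_id.const_mul (-T)).cexp).mul (differentiable_pow _)).div_const _
    have hC := DiffContOnCl.circleIntegral_sub_inv_smul hfd.diffContOnCl hballw
    have heq : Set.EqOn (fun z => Complex.exp (-T*z) * z^(2*(M-N)) / (A*z - 1))
        (fun z => (z - 1/A)⁻¹ • (Complex.exp (-T*z) * z^(2*(M-N)) / A))
        (Metric.sphere c R) := by
      intro z hz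
      have hB := hsB z hz
      have hzw : z - 1/A = (A*z - 1)/A := by field_simp
      simp only [smul_eq_mul]
      rw [hzw, inv_div]
      field_simp
    rw [circleIntegral.integral_congr hR.le heq, hC, smul_eq_mul]
  -- name the two opaque quantities
  obtain ⟨S, hSdef⟩ : ∃ S, S = ∮ z in C(c,R), Complex.exp (-T*z) * z^(2*M - 1) /
      ((z-1)^(2*N-1) * (A*z-1)) := ⟨_, rfl⟩
  rw [hαn, ← hSdef] at hkey
  rw [← hSdef]
  obtain ⟨L, hLdef⟩ : ∃ L, L = ∑ j ∈ Finset.range (2*N-1), (-(a:ℂ))^j *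
      ∑ i ∈ Finset.range (j+1), ((2*(M-N)+j).choose (j-i) : ℂ) * (-T)^i /
        (i.factorial : ℂ) := ⟨_, rfl⟩
  have hsumval : (∑ j ∈ Finset.range (2*N-1), (-(a:ℂ))^j *
        ∮ z in C(c,R), Complex.exp (-T*z) * z^(2*(M-N)+j) / (z-1)^(j+1)) =
      2*Real.pi*Complex.I * Complex.exp (-T) * L := by
    rw [hLdef, Finset.mul_sum]
    refine Finset.sum_congr rfl fun j _ => ?_
    rw [hGval j]
    ring
  rw [hsumval, hQ, Odd.neg_pow hodd] at hkey
  -- cast the left-hand side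
  simp only [genLaguerre]
  push_cast
  rw [← hT, ← hAdef]
  have hLcast : (∑ j ∈ Finset.range (2*N-1), (-(a:ℂ))^j *
        ∑ k ∈ Finset.range (j+1), (-1:ℂ)^k * ((j + 2*(M-N)).choose (j-k) : ℂ) * T^k /
          (k.factorial : ℂ)) = L := by
    rw [hLdef]
    refine Finset.sum_congr rfl fun j _ => ?_
    congr 1
    refine Finset.sum_congr rfl fun i _ => ?_
    rw [Nat.add_comm j (2*(M-N)), neg_pow T]
    ring
  rw [hLcast]
  have h2pi : (2*(Real.pi:ℂ)*Complex.I) ≠ 0 := by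
    simp [Real.pi_ne_zero, Complex.I_ne_zero]
  have he1 : Complex.exp T * Complex.exp (-T) = 1 := by
    rw [← Complex.exp_add]; simp
  have he2 : Complex.exp ((a:ℂ)/A * T) = Complex.exp T * Complex.exp (-T * (1/A)) := by
    rw [← Complex.exp_add]
    congr 1
    field_simp
    ring
  rw [he2]
  simp only [hAdef] at hkey hA ⊢
  have hP : (2*(Real.pi:ℂ)*Complex.I) * (2*(Real.pi:ℂ)*Complex.I)⁻¹ = 1 := mul_inv_cancel₀ h2pi
  have hAn : (1+(a:ℂ))^(2*(M-N)+1) * ((1/(1+(a:ℂ)))^(2*(M-N)) / (1+(a:ℂ))) = 1 := by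
    rw [div_pow, one_pow, pow_succ]
    field_simp
  linear_combination (-(1+(a:ℂ))^(2*(M-N)+1) * Complex.exp T * (2*(Real.pi:ℂ)*Complex.I)⁻¹) * hkey +
    ((1+(a:ℂ))^(2*(M-N)+1) * Complex.exp T * Complex.exp (-T) * L -
      (1+(a:ℂ))^(2*(M-N)+1) * Complex.exp T * Complex.exp (-T * (1 / (1 + (a:ℂ)))) *
        ((1/(1+(a:ℂ)))^(2*(M-N)) / (1+(a:ℂ)))) * hP +
    ((1+(a:ℂ))^(2*(M-N)+1) * L) * he1 -
    (Complex.exp T * Complex.exp (-T * (1 / (1 + (a:ℂ))))) * hAn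
end
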